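/- Let n ≥ 1, let T ∈ ℝ^{n×n} be the tridiagonal Toeplitz matrix with 2 on the diagonal and −1 on the first sub- and superdiagonals, let U ∈ ℝ^{n×2} have columns √2·e₁ and √2·e_n, and let M = (I + T⁻¹U (T⁻¹U)ᵗ)⁻¹. Then every diagonal entry of M is strictly positive; explicitly, for 1 ≤ i ≤ n, m_{i,i} = (n³ − n² − 3n − 3)/((n+1)(n² + 2n + 3)) + 12i/(n² + 2n + 3) − 12i²/((n+1)(n² + 2n + 3)) > 0. -/

import Mathlib

open scoped ENNReal
open Matrix

/-- The `n × n` tridiagonal Toeplitz matrix `tridiag(-1, 2, -1)`. -/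
def Tmat (n : ℕ) : Matrix (Fin n) (Fin n) ℝ :=
  Matrix.of fun i j =>
    if (i : ℕ) = (j : ℕ) then 2
    else if (j : ℕ) = (i : ℕ) + 1 ∨ (i : ℕ) = (j : ℕ) + 1 then -1
    else 0

/-- The `n × 2` matrix whose columns are `√2·e₁` and `√2·eₙ`. -/
noncomputable def Umat (n : ℕ) : Matrix (Fin n) (Fin 2) ℝ :=
  Matrix.of fun i k =>
    if k = 0 then (if (i : ℕ) = 0 then Real.sqrt 2 else 0)
    else (if (i : ℕ) = n - 1 then Real.sqrt 2 else 0)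

noncomputable def tfun (a k : ℕ) : ℝ :=
  if a = k then 2 else if k = a + 1 ∨ a = k + 1 then -1 else 0

noncomputable def sfun (n b k : ℕ) : ℝ :=
  if k ≤ b then ((k : ℝ) + 1) * ((n : ℝ) - (b : ℝ)) / ((n : ℝ) + 1)
  else ((b : ℝ) + 1) * ((n : ℝ) - (k : ℝ)) / ((n : ℝ) + 1)

lemma key_sum (n a b : ℕ) (ha : a < n) (hb : b < n) :
    ∑ k ∈ Finset.range n, tfun a k * sfun n b k = if a = b then 1 else 0 := by
  have hsplit : ∀ k, tfun a k * sfun n b k =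
      (if k = a then 2 * sfun n b k else 0) + (if k = a + 1 then -sfun n b k else 0)
        + (if a = k + 1 then -sfun n b k else 0) := by
    intro k
    unfold tfun
    split_ifs <;> (try omega) <;> ring
  rw [Finset.sum_congr rfl fun k _ => hsplit k]
  rw [Finset.sum_add_distrib, Finset.sum_add_distrib]
  rw [Finset.sum_ite_eq' (Finset.range n) a, Finset.sum_ite_eq' (Finset.range n) (a+1)]
  have h3 : (∑ k ∈ Finset.range n, if a = k + 1 then -sfun n b k else 0)
      = if 1 ≤ a then -sfun n b (a - 1) else 0 := by
    rcases a with _ | m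
    · simp
    · have he : ∀ k, (if m + 1 = k + 1 then -sfun n b k else 0)
          = (if k = m then -sfun n b k else 0) := by
        intro k; split_ifs <;> first | rfl | omega
      rw [Finset.sum_congr rfl fun k _ => he k, Finset.sum_ite_eq' (Finset.range n) m,
        if_pos (Finset.mem_range.mpr (by omega))]
      simp
  rw [h3, if_pos (Finset.mem_range.mpr ha)]
  have hne : ((n:ℝ)+1) ≠ 0 := by positivity
  simp only [Finset.mem_range]
  rcases a with _ | m
  · -- first row
    rw [if_neg (by omega : ¬ 1 ≤ 0), add_zero]
    rcases Nat.eq_zero_or_pos b with rfl | hb1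
    · rcases eq_or_lt_of_le (Nat.succ_le_of_lt ha) with h1 | h1
      · obtain rfl : n = 1 := h1.symm
        rw [if_neg (by omega)]
        unfold sfun
        norm_num
      · rw [if_pos h1]
        unfold sfun
        split_ifs <;> try omega
        push_cast; field_simp; ring
    · rw [if_pos (by omega : 0 + 1 < n)]
      unfold sfun
      split_ifs <;> try omega
      push_cast; field_simp; ring
  · -- row m+1
    simp only [Nat.add_sub_cancel]
    rw [if_pos (by omega : 1 ≤ m + 1)]
    rcases Nat.lt_or_ge (m + 1 + 1) n with hlt | hge
    · rw [if_pos hlt]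
      rcases Nat.lt_trichotomy b (m + 1) with h | rfl | h
      · rcases Nat.lt_succ_iff_lt_or_eq.mp h with h2 | rfl <;>
          · unfold sfun
            split_ifs <;> try omega
            push_cast; field_simp; ring
      · unfold sfun
        split_ifs <;> try omega
        push_cast; field_simp; ring
      · unfold sfun
        split_ifs <;> try omega
        push_cast; field_simp; ring
    · obtain rfl : n = m + 1 + 1 := by omega
      rw [if_neg (by omega)]
      rcases Nat.lt_trichotomy b (m + 1) with h | rfl | h
      · rcases Nat.lt_succ_iff_lt_or_eq.mp h with h2 | rfl <;>
          · unfold sfun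
            split_ifs <;> try omega
            push_cast; field_simp; ring
      · unfold sfun
        split_ifs <;> try omega
        push_cast; field_simp; ring
      · omega

noncomputable def Smat (n : ℕ) : Matrix (Fin n) (Fin n) ℝ :=
  Matrix.of fun i j => sfun n (j : ℕ) (i : ℕ)

lemma TS (n : ℕ) : Tmat n * Smat n = 1 := by
  ext i j
  rw [Matrix.mul_apply, Matrix.one_apply]
  have h1 : (∑ k : Fin n, Tmat n i k * Smat n k j)
      = ∑ k ∈ Finset.range n, tfun (i : ℕ) k * sfun n (j : ℕ) k :=
    Fin.sum_univ_eq_sum_range (fun k => tfun (i : ℕ) k * sfun n (j : ℕ) k) n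
  rw [h1, key_sum n i j i.isLt j.isLt]
  simp [Fin.ext_iff]

lemma Tinv (n : ℕ) : (Tmat n)⁻¹ = Smat n := Matrix.inv_eq_right_inv (TS n)

lemma sum1 (n : ℕ) : ∑ i ∈ Finset.range n, ((i : ℝ) + 1) = n * (n + 1) / 2 := by
  induction n with
  | zero => simp
  | succ m ih => rw [Finset.sum_range_succ, ih]; push_cast; ring

lemma sum2 (n : ℕ) : ∑ i ∈ Finset.range n, (((i : ℝ) + 1) * ((i : ℝ) + 1))
    = n * (n + 1) * (2 * n + 1) / 6 := by
  induction n with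
  | zero => simp
  | succ m ih => rw [Finset.sum_range_succ, ih]; push_cast; ring

lemma sum3 (n : ℕ) : ∑ i ∈ Finset.range n, (((n : ℝ) - (i : ℝ)) * ((n : ℝ) - (i : ℝ)))
    = n * (n + 1) * (2 * n + 1) / 6 := by
  have h : ∀ i ∈ Finset.range n, ((n : ℝ) - (i : ℝ)) * ((n : ℝ) - (i : ℝ))
      = (((n : ℝ) + 1) * ((n : ℝ) + 1) - 2 * ((n : ℝ) + 1) * ((i : ℝ) + 1))
          + ((i : ℝ) + 1) * ((i : ℝ) + 1) := by
    intros; ring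
  rw [Finset.sum_congr rfl h, Finset.sum_add_distrib, Finset.sum_sub_distrib,
    Finset.sum_const, ← Finset.mul_sum, sum1, sum2, nsmul_eq_mul, Finset.card_range]
  ring

lemma sum4 (n : ℕ) : ∑ i ∈ Finset.range n, (((n : ℝ) - (i : ℝ)) * ((i : ℝ) + 1))
    = n * (n + 1) * (n + 2) / 6 := by
  have h : ∀ i ∈ Finset.range n, ((n : ℝ) - (i : ℝ)) * ((i : ℝ) + 1)
      = ((n : ℝ) + 1) * ((i : ℝ) + 1) - ((i : ℝ) + 1) * ((i : ℝ) + 1) := by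
    intros; ring
  rw [Finset.sum_congr rfl h, Finset.sum_sub_distrib, ← Finset.mul_sum, sum1, sum2]
  ring

lemma sum4' (n : ℕ) : ∑ i ∈ Finset.range n, ((((i : ℝ) + 1)) * ((n : ℝ) - (i : ℝ)))
    = n * (n + 1) * (n + 2) / 6 := by
  rw [← sum4]
  exact Finset.sum_congr rfl fun i _ => mul_comm _ _

noncomputable def Amat (n : ℕ) : Matrix (Fin n) (Fin 2) ℝ :=
  Matrix.of fun i k =>
    if k = 0 then Real.sqrt 2 * ((n : ℝ) - ((i : ℕ) : ℝ)) / ((n : ℝ) + 1)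
    else Real.sqrt 2 * (((i : ℕ) : ℝ) + 1) / ((n : ℝ) + 1)

lemma Amat0 (n : ℕ) (j : Fin n) :
    Amat n j 0 = Real.sqrt 2 * ((n : ℝ) - ((j : ℕ) : ℝ)) / ((n : ℝ) + 1) := rfl

lemma Amat1 (n : ℕ) (j : Fin n) :
    Amat n j 1 = Real.sqrt 2 * (((j : ℕ) : ℝ) + 1) / ((n : ℝ) + 1) := rfl

noncomputable def Gmat (n : ℕ) : Matrix (Fin 2) (Fin 2) ℝ :=
  Matrix.of fun k l =>
    if k = l then (n : ℝ) * (2 * n + 1) / (3 * ((n : ℝ) + 1))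
    else (n : ℝ) * ((n : ℝ) + 2) / (3 * ((n : ℝ) + 1))

noncomputable def Cmat (n : ℕ) : Matrix (Fin 2) (Fin 2) ℝ :=
  Matrix.of fun k l =>
    if k = l then (2 * (n : ℝ) ^ 2 + 4 * n + 3) / (((n : ℝ) + 1) * ((n : ℝ) ^ 2 + 2 * n + 3))
    else -((n : ℝ) * ((n : ℝ) + 2)) / (((n : ℝ) + 1) * ((n : ℝ) ^ 2 + 2 * n + 3))

lemma sqrt2_sq : Real.sqrt 2 * Real.sqrt 2 = 2 := Real.mul_self_sqrt (by norm_num)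

lemma prodsum (n : ℕ) (f g : ℕ → ℝ) :
    (∑ j : Fin n, (Real.sqrt 2 * f (j : ℕ) / ((n : ℝ) + 1)) * (Real.sqrt 2 * g (j : ℕ) / ((n : ℝ) + 1)))
      = 2 / (((n : ℝ) + 1) * ((n : ℝ) + 1)) * ∑ j ∈ Finset.range n, f j * g j := by
  rw [Fin.sum_univ_eq_sum_range
    (fun j : ℕ => (Real.sqrt 2 * f j / ((n : ℝ) + 1)) * (Real.sqrt 2 * g j / ((n : ℝ) + 1))) n,
    Finset.mul_sum]
  refine Finset.sum_congr rfl fun j _ => ?_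
  calc (Real.sqrt 2 * f j / ((n : ℝ) + 1)) * (Real.sqrt 2 * g j / ((n : ℝ) + 1))
      = (Real.sqrt 2 * f j) * (Real.sqrt 2 * g j) / (((n : ℝ) + 1) * ((n : ℝ) + 1)) :=
        div_mul_div_comm _ _ _ _
    _ = (Real.sqrt 2 * Real.sqrt 2) * (f j * g j) / (((n : ℝ) + 1) * ((n : ℝ) + 1)) := by
        rw [show (Real.sqrt 2 * f j) * (Real.sqrt 2 * g j)
          = (Real.sqrt 2 * Real.sqrt 2) * (f j * g j) from by ring]
    _ = 2 * (f j * g j) / (((n : ℝ) + 1) * ((n : ℝ) + 1)) := by rw [sqrt2_sq]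
    _ = 2 / (((n : ℝ) + 1) * ((n : ℝ) + 1)) * (f j * g j) := by ring

lemma hG (n : ℕ) : (Amat n)ᵀ * Amat n = Gmat n := by
  have hne : ((n : ℝ) + 1) ≠ 0 := by positivity
  ext k l
  rw [Matrix.mul_apply]
  simp only [Matrix.transpose_apply]
  fin_cases k <;> fin_cases l <;>
    simp only [Fin.mk_zero, Fin.mk_one, Amat0, Amat1, Gmat, Matrix.of_apply, if_true,
      Fin.zero_eq_one_iff, Fin.one_eq_zero_iff, Nat.succ_ne_self, if_false, ite_true, ite_false,
      Nat.reduceEqDiff, reduceCtorEq]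
  · rw [prodsum n (fun j => (n : ℝ) - j) (fun j => (n : ℝ) - j), sum3]
    norm_num
    field_simp
    ring
  · rw [prodsum n (fun j => (n : ℝ) - j) (fun j => (j : ℝ) + 1), sum4]
    norm_num
    field_simp
    ring
  · rw [prodsum n (fun j => (j : ℝ) + 1) (fun j => (n : ℝ) - j), sum4']
    norm_num
    field_simp
    ring
  · rw [prodsum n (fun j => (j : ℝ) + 1) (fun j => (j : ℝ) + 1), sum2]
    norm_num
    field_simp
    ring

lemma GC (n : ℕ) : ((1 : Matrix (Fin 2) (Fin 2) ℝ) + Gmat n) * Cmat n = 1 := by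
  have h1 : ((n : ℝ) + 1) ≠ 0 := by positivity
  have h2 : ((n : ℝ) ^ 2 + 2 * n + 3) ≠ 0 := by positivity
  ext k l
  rw [Matrix.mul_apply, Fin.sum_univ_two]
  fin_cases k <;> fin_cases l <;>
    simp only [Fin.mk_zero, Fin.mk_one, Gmat, Cmat, Matrix.of_apply, Matrix.add_apply,
      Matrix.one_apply, if_true, Fin.zero_eq_one_iff, Fin.one_eq_zero_iff, Nat.succ_ne_self,
      if_false, ite_true, ite_false, Nat.reduceEqDiff, reduceCtorEq] <;>
    (field_simp; ring)

lemma woodbury (n : ℕ) :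
    ((1 : Matrix (Fin n) (Fin n) ℝ) + Amat n * (Amat n)ᵀ)
      * (1 - Amat n * Cmat n * (Amat n)ᵀ) = 1 := by
  have hGC : Gmat n * Cmat n = 1 - Cmat n := by
    have h := GC n
    rw [Matrix.add_mul, Matrix.one_mul] at h
    rw [← h]; abel
  have hXY : (Amat n * (Amat n)ᵀ) * (Amat n * Cmat n * (Amat n)ᵀ)
      = Amat n * (Amat n)ᵀ - Amat n * Cmat n * (Amat n)ᵀ := by
    calc (Amat n * (Amat n)ᵀ) * (Amat n * Cmat n * (Amat n)ᵀ)
        = Amat n * (((Amat n)ᵀ * Amat n) * Cmat n) * (Amat n)ᵀ := by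
          simp only [Matrix.mul_assoc]
      _ = Amat n * (Gmat n * Cmat n) * (Amat n)ᵀ := by rw [hG]
      _ = Amat n * (1 - Cmat n) * (Amat n)ᵀ := by rw [hGC]
      _ = Amat n * (Amat n)ᵀ - Amat n * Cmat n * (Amat n)ᵀ := by
          rw [Matrix.mul_sub, Matrix.mul_one, Matrix.sub_mul]
  have expand : ((1 : Matrix (Fin n) (Fin n) ℝ) + Amat n * (Amat n)ᵀ)
      * (1 - Amat n * Cmat n * (Amat n)ᵀ)
      = 1 + Amat n * (Amat n)ᵀ - Amat n * Cmat n * (Amat n)ᵀ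
        - (Amat n * (Amat n)ᵀ) * (Amat n * Cmat n * (Amat n)ᵀ) := by
    noncomm_ring
  rw [expand, hXY]
  abel

lemma SU (n : ℕ) (hn : 1 ≤ n) : Smat n * Umat n = Amat n := by
  ext i k
  rw [Matrix.mul_apply]
  fin_cases k
  · have h1 : ∀ j : Fin n, Smat n i j * Umat n j ⟨0, by omega⟩
        = if j = (⟨0, by omega⟩ : Fin n) then Smat n i j * Real.sqrt 2 else 0 := by
      intro j
      have hu : Umat n j ⟨0, by omega⟩ = if (j : ℕ) = 0 then Real.sqrt 2 else 0 := rfl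
      rw [hu]
      by_cases hj : (j : ℕ) = 0
      · rw [if_pos hj, if_pos (Fin.ext hj)]
      · rw [if_neg hj, if_neg (fun hh => hj (congrArg Fin.val hh)), mul_zero]
    rw [Finset.sum_congr rfl fun j _ => h1 j, Finset.sum_ite_eq',
      if_pos (Finset.mem_univ _)]
    show sfun n 0 (i : ℕ) * Real.sqrt 2 = Amat n i 0
    rw [Amat0]
    unfold sfun
    split_ifs with h
    · obtain h0 : (i : ℕ) = 0 := Nat.le_zero.mp h
      rw [h0]; push_cast; ring
    · push_cast; ring
  · have h1 : ∀ j : Fin n, Smat n i j * Umat n j ⟨1, by omega⟩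
        = if j = (⟨n - 1, by omega⟩ : Fin n) then Smat n i j * Real.sqrt 2 else 0 := by
      intro j
      have hu : Umat n j ⟨1, by omega⟩ = if (j : ℕ) = n - 1 then Real.sqrt 2 else 0 := rfl
      rw [hu]
      by_cases hj : (j : ℕ) = n - 1
      · rw [if_pos hj, if_pos (Fin.ext hj)]
      · rw [if_neg hj, if_neg (fun hh => hj (congrArg Fin.val hh)), mul_zero]
    rw [Finset.sum_congr rfl fun j _ => h1 j, Finset.sum_ite_eq',
      if_pos (Finset.mem_univ _)]
    show sfun n (n - 1) (i : ℕ) * Real.sqrt 2 = Amat n i 1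
    rw [Amat1]
    unfold sfun
    rw [if_pos (by omega : (i : ℕ) ≤ n - 1), Nat.cast_sub hn]
    push_cast
    ring

noncomputable def Bmat (n : ℕ) : Matrix (Fin n) (Fin 2) ℝ :=
  Matrix.of fun i k =>
    if k = 0 then ((n : ℝ) - ((i : ℕ) : ℝ)) / ((n : ℝ) + 1)
    else (((i : ℕ) : ℝ) + 1) / ((n : ℝ) + 1)

lemma AB (n : ℕ) : Amat n = Real.sqrt 2 • Bmat n := by
  ext i k
  fin_cases k <;>
    simp only [Fin.mk_zero, Fin.mk_one, Amat, Bmat, Matrix.of_apply, Matrix.smul_apply,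
      smul_eq_mul, if_true, ite_true, ite_false, Fin.one_eq_zero_iff, Nat.succ_ne_self,
      if_false, reduceCtorEq, Nat.reduceEqDiff] <;>
    ring

lemma ACA (n : ℕ) : Amat n * Cmat n * (Amat n)ᵀ
    = (2 : ℝ) • (Bmat n * Cmat n * (Bmat n)ᵀ) := by
  rw [AB, Matrix.transpose_smul, Matrix.smul_mul, Matrix.smul_mul, Matrix.mul_smul,
    smul_smul, sqrt2_sq]

/-- Every diagonal entry of `M = (I + T⁻¹U (T⁻¹U)ᵗ)⁻¹` is strictly positive;
explicitly (1-based index `i' = i+1`),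
`m_{i,i} = (n³-n²-3n-3)/((n+1)(n²+2n+3)) + 12i'/(n²+2n+3) - 12i'²/((n+1)(n²+2n+3)) > 0`. -/
theorem M_diag_pos (n : ℕ) (hn : 1 ≤ n) :
    ∀ i : Fin n,
      ((1 : Matrix (Fin n) (Fin n) ℝ) + (Tmat n)⁻¹ * Umat n * ((Tmat n)⁻¹ * Umat n)ᵀ)⁻¹ i i =
        (let x : ℝ := (i : ℕ) + 1
         ((n : ℝ) ^ 3 - (n : ℝ) ^ 2 - 3 * n - 3) / (((n : ℝ) + 1) * ((n : ℝ) ^ 2 + 2 * n + 3)) +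
           12 * x / ((n : ℝ) ^ 2 + 2 * n + 3) -
           12 * x ^ 2 / (((n : ℝ) + 1) * ((n : ℝ) ^ 2 + 2 * n + 3))) ∧
      0 < ((1 : Matrix (Fin n) (Fin n) ℝ) + (Tmat n)⁻¹ * Umat n * ((Tmat n)⁻¹ * Umat n)ᵀ)⁻¹ i i := by
  have hA : (Tmat n)⁻¹ * Umat n = Amat n := by rw [Tinv, SU n hn]
  have hMinv : ((1 : Matrix (Fin n) (Fin n) ℝ) + (Tmat n)⁻¹ * Umat n * ((Tmat n)⁻¹ * Umat n)ᵀ)⁻¹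
      = 1 - Amat n * Cmat n * (Amat n)ᵀ := by
    rw [hA]; exact Matrix.inv_eq_right_inv (woodbury n)
  intro i
  have hne : ((n : ℝ) + 1) ≠ 0 := by positivity
  have hne2 : ((n : ℝ) ^ 2 + 2 * n + 3) ≠ 0 := by positivity
  have hval : ((1 - Amat n * Cmat n * (Amat n)ᵀ : Matrix (Fin n) (Fin n) ℝ)) i i
      = ((n : ℝ) ^ 3 - (n : ℝ) ^ 2 - 3 * n - 3) / (((n : ℝ) + 1) * ((n : ℝ) ^ 2 + 2 * n + 3)) +
          12 * (((i : ℕ) : ℝ) + 1) / ((n : ℝ) ^ 2 + 2 * n + 3) -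
          12 * (((i : ℕ) : ℝ) + 1) ^ 2 / (((n : ℝ) + 1) * ((n : ℝ) ^ 2 + 2 * n + 3)) := by
    rw [Matrix.sub_apply, Matrix.one_apply_eq, ACA, Matrix.smul_apply, smul_eq_mul]
    rw [Matrix.mul_apply, Fin.sum_univ_two]
    simp only [Matrix.mul_apply, Fin.sum_univ_two, Matrix.transpose_apply, Bmat, Cmat,
      Matrix.of_apply, if_true, ite_true, ite_false, Fin.one_eq_zero_iff, Fin.zero_eq_one_iff,
      Nat.succ_ne_self, if_false, reduceCtorEq, Nat.reduceEqDiff, one_ne_zero]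
    field_simp
    ring
  have hx1 : (1 : ℝ) ≤ ((i : ℕ) : ℝ) + 1 := by
    have : (0 : ℝ) ≤ ((i : ℕ) : ℝ) := Nat.cast_nonneg _
    linarith
  have hx2 : ((i : ℕ) : ℝ) + 1 ≤ (n : ℝ) := by
    have : (i : ℕ) + 1 ≤ n := i.isLt
    exact_mod_cast this
  have hn' : (1 : ℝ) ≤ (n : ℝ) := by exact_mod_cast hn
  have hpos : 0 < ((n : ℝ) ^ 3 - (n : ℝ) ^ 2 - 3 * n - 3) / (((n : ℝ) + 1) * ((n : ℝ) ^ 2 + 2 * n + 3)) +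
          12 * (((i : ℕ) : ℝ) + 1) / ((n : ℝ) ^ 2 + 2 * n + 3) -
          12 * (((i : ℕ) : ℝ) + 1) ^ 2 / (((n : ℝ) + 1) * ((n : ℝ) ^ 2 + 2 * n + 3)) := by
    set x : ℝ := ((i : ℕ) : ℝ) + 1 with hxdef
    have hD : (0 : ℝ) < ((n : ℝ) + 1) * ((n : ℝ) ^ 2 + 2 * n + 3) := by positivity
    have hcomb : ((n : ℝ) ^ 3 - (n : ℝ) ^ 2 - 3 * n - 3) / (((n : ℝ) + 1) * ((n : ℝ) ^ 2 + 2 * n + 3)) +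
          12 * x / ((n : ℝ) ^ 2 + 2 * n + 3) -
          12 * x ^ 2 / (((n : ℝ) + 1) * ((n : ℝ) ^ 2 + 2 * n + 3))
        = ((n : ℝ) ^ 3 - (n : ℝ) ^ 2 - 3 * n - 3 + 12 * x * ((n : ℝ) + 1) - 12 * x ^ 2)
            / (((n : ℝ) + 1) * ((n : ℝ) ^ 2 + 2 * n + 3)) := by
      field_simp
    rw [hcomb]
    apply div_pos _ hD
    nlinarith [mul_nonneg (by linarith : (0:ℝ) ≤ x - 1) (by linarith : (0:ℝ) ≤ (n : ℝ) - x),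
      mul_nonneg (sq_nonneg ((n : ℝ))) (by linarith : (0:ℝ) ≤ (n : ℝ) - 1)]
  rw [hMinv]
  exact ⟨hval, by rw [hval]; exact hpos⟩
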